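/- Let l, m be natural numbers with m ≤ l, m ≡ 0 (mod 4) and l ≡ 2 (mod 8). Then H_l^m(−2) ≡ 0 (mod 8). -/

import Mathlib

/-- The coefficient `σ_l^m(k)` of the Holt–Ille polynomial `H_l^m`. -/
def sigmaLM (l m k : ℕ) : ℚ :=
  if (l + m) % 2 = 0 then
    (-2 : ℚ) ^ k * (((l - m) / 2).choose k : ℚ) * (((l + m) / 2).choose k : ℚ) /
      (((2 * k).choose k : ℚ))
  else
    (-2 : ℚ) ^ k * (((l - m) / 2).choose k : ℚ) * (((l + m) / 2).choose k : ℚ) /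
      ((((2 * k).choose k : ℚ)) * (2 * (k : ℚ) + 1))

/-- The value `H_l^m(−2) = Σ_{k=0}^{⌊(l−m)/2⌋} σ_l^m(k)`. -/
def HLM (l m : ℕ) : ℚ := ∑ k ∈ Finset.range ((l - m) / 2 + 1), sigmaLM l m k

/-- `a ≡ b (mod 2^N)` for rationals (with odd denominators), expressed via the 2-adic
norm on `ℚ₂`: it means `‖a − b‖₂ ≤ 2^(−N)`. -/
def Cong2 (a b : ℚ) (N : ℕ) : Prop :=
  ‖((a - b : ℚ) : ℚ_[2])‖ ≤ (2 : ℝ) ^ (-(N : ℤ))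

private lemma cast_choose_three' (n : ℕ) : (n.choose 3 : ℚ) = n * ((n:ℚ)-1) * ((n:ℚ)-2) / 6 := by
  induction n with
  | zero => norm_num
  | succ n ih =>
    rw [show 3 = 2 + 1 from rfl, Nat.choose_succ_succ]
    push_cast [Nat.cast_choose_two, ih]
    ring

private lemma norm_nat_le_one' (n : ℕ) : ‖(n : ℚ_[2])‖ ≤ 1 := by
  simpa using Padic.norm_int_le_one (p := 2) (n : ℤ)

private lemma norm_odd_eq_one' (n : ℕ) (h : n % 2 = 1) : ‖(n : ℚ_[2])‖ = 1 := by
  refine le_antisymm (norm_nat_le_one' n) (not_lt.mp ?_)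
  intro hlt
  have h2 : ((2:ℕ):ℤ) ∣ (n : ℤ) := by
    have := (Padic.norm_intCast_lt_one_iff (p := 2) (k := (n : ℤ))).mp (by simpa using hlt)
    exact_mod_cast this
  omega

private lemma norm_two_pad' : ‖(2 : ℚ_[2])‖ = 1/2 := by
  have := Padic.norm_p (p := 2)
  norm_num at this ⊢
  simpa using this

private lemma norm_eight' : ‖(8 : ℚ_[2])‖ = 1/8 := by
  rw [show (8:ℚ_[2]) = 2^3 by norm_num, norm_pow, norm_two_pad']
  norm_num

private lemma oddDF' : ∀ n : ℕ, Nat.doubleFactorial (2*n+1) % 2 = 1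
  | 0 => rfl
  | n+1 => by
    rw [show 2*(n+1)+1 = (2*n+1)+2 by ring, Nat.doubleFactorial_add_two]
    rw [Nat.mul_mod, oddDF' n]
    omega

open Nat in
private lemma norm_sigma_le' (l m k : ℕ) (hpar : (l+m) % 2 = 0) (hk : 4 ≤ k) :
    ‖((sigmaLM l m k : ℚ) : ℚ_[2])‖ ≤ 1/8 := by
  set a := (l-m)/2 with ha
  set b := (l+m)/2 with hb
  set d := Nat.doubleFactorial (2*k-1) with hd
  have hdd : (2*k)! = 2^k * k ! * d := by
    have h1 : (2*k-1)+1 = 2*k := by omega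
    calc (2*k)! = ((2*k-1)+1)! := by rw [h1]
    _ = ((2*k-1)+1)‼ * (2*k-1)‼ := Nat.factorial_eq_mul_doubleFactorial _
    _ = (2*k)‼ * d := by rw [h1, hd]
    _ = 2^k * k ! * d := by rw [Nat.doubleFactorial_two_mul]
  have hkey : ((2*k).choose k : ℚ) * (k ! : ℚ) = 2^k * (d : ℚ) := by
    have h := congrArg (Nat.cast : ℕ → ℚ)
      (Nat.choose_mul_factorial_mul_factorial (show k ≤ 2*k by omega))
    rw [show 2*k-k = k by omega] at h
    push_cast at h
    have h2 := congrArg (Nat.cast : ℕ → ℚ) hdd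
    push_cast at h2
    have hk0 : (k ! : ℚ) ≠ 0 := by exact_mod_cast k.factorial_ne_zero
    apply mul_right_cancel₀ hk0
    linear_combination h + h2
  have hC0 : ((2*k).choose k : ℚ) ≠ 0 := by
    exact_mod_cast (Nat.choose_pos (show k ≤ 2*k by omega)).ne'
  have hd0 : (d : ℚ) ≠ 0 := by exact_mod_cast (Nat.doubleFactorial_pos _).ne'
  have hsig : sigmaLM l m k = (-1)^k * (k ! : ℚ) * (a.choose k : ℚ) * (b.choose k : ℚ) / (d:ℚ) := by
    unfold sigmaLM
    rw [if_pos hpar]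
    rw [show ((-2:ℚ)) = (-1)*2 by norm_num, mul_pow]
    rw [div_eq_div_iff hC0 hd0]
    linear_combination (-((-1:ℚ)^k) * (a.choose k : ℚ) * (b.choose k : ℚ)) * hkey
  rw [hsig]
  push_cast
  rw [norm_div, norm_mul, norm_mul, norm_mul]
  have h1 : ‖((-1:ℚ_[2]))^k‖ = 1 := by rw [norm_pow, norm_neg, norm_one, one_pow]
  have h2 : ‖((k ! : ℕ) : ℚ_[2])‖ ≤ 1/8 := by
    have h8 : (8:ℕ) ∣ 4 ! := by decide
    obtain ⟨c, hc⟩ : 8 ∣ k ! := dvd_trans h8 (Nat.factorial_dvd_factorial hk)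
    rw [hc]
    push_cast
    rw [norm_mul, norm_eight']
    calc (1/8 : ℝ) * ‖((c:ℕ) : ℚ_[2])‖ ≤ 1/8 * 1 := by gcongr; exact norm_nat_le_one' c
    _ = 1/8 := by norm_num
  have hdnorm : ‖((d:ℕ) : ℚ_[2])‖ = 1 := by
    apply norm_odd_eq_one'
    rw [hd, show 2*k-1 = 2*(k-1)+1 by omega]
    exact oddDF' (k-1)
  rw [hdnorm, h1, div_one, one_mul]
  calc ‖((k ! : ℕ):ℚ_[2])‖ * ‖((a.choose k : ℕ):ℚ_[2])‖ * ‖((b.choose k : ℕ):ℚ_[2])‖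
      ≤ 1/8 * 1 * 1 := by
        gcongr <;> first | exact h2 | exact norm_nat_le_one' _
  _ = 1/8 := by norm_num

open Finset in
/-- If `m ≡ 0 (mod 4)`, `m ≤ l` and `l ≡ 2 (mod 8)`, then `H_l^m(−2) ≡ 0 (mod 8)`. -/
theorem HLM_cong_zero_of_l_mod_eight (l m : ℕ) (hml : m ≤ l) (hm : m % 4 = 0)
    (hl : l % 8 = 2) : Cong2 (HLM l m) 0 3 := by
  obtain ⟨s, hs⟩ : ∃ s, l = 8*s+2 := ⟨l/8, by omega⟩
  obtain ⟨t, ht⟩ : ∃ t, m = 4*t := ⟨m/4, by omega⟩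
  have hpar : (l+m) % 2 = 0 := by omega
  set a := (l-m)/2 with ha
  have haN : a = 4*s+1-2*t := by omega
  have htle : 2*t ≤ 4*s+1 := by omega
  have hbN : (l+m)/2 = 4*s+1+2*t := by omega
  have hA : ((a:ℕ) : ℚ) = 4*(s:ℚ)+1-2*(t:ℚ) := by
    rw [haN, Nat.cast_sub htle]; push_cast; ring
  have hB : (((l+m)/2 : ℕ) : ℚ) = 4*(s:ℚ)+1+2*(t:ℚ) := by
    rw [hbN]; push_cast; ring
  set N : ℤ := 19*(t:ℤ)^2 + 13*(t:ℤ)^4 + 4*(t:ℤ)^6 - 45*(s:ℤ) - 30*(s:ℤ)*(t:ℤ)^2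
    - 76*(s:ℤ)^2 - 120*(s:ℤ)^2*(t:ℤ)^2 - 48*(s:ℤ)^2*(t:ℤ)^4 + 120*(s:ℤ)^3
    + 272*(s:ℤ)^4 + 192*(s:ℤ)^4*(t:ℤ)^2 - 256*(s:ℤ)^6 with hN
  have hT4 : ∑ k ∈ range 4, sigmaLM l m k = 8 * (N:ℚ) / 45 := by
    rw [Finset.sum_range_succ, Finset.sum_range_succ, Finset.sum_range_succ,
      Finset.sum_range_one]
    unfold sigmaLM
    rw [if_pos hpar, if_pos hpar, if_pos hpar, if_pos hpar]
    rw [← ha]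
    simp only [Nat.choose_zero_right, Nat.choose_one_right, Nat.cast_choose_two,
      cast_choose_three']
    rw [hA, hB, hN]
    norm_num
    field_simp
    ring
  have hzero : ∀ k, a < k → sigmaLM l m k = 0 := by
    intro k hk
    have h0 : ((l-m)/2).choose k = 0 := Nat.choose_eq_zero_of_lt (by omega)
    simp [sigmaLM, hpar, h0]
  set M := max (a+1) 4 with hM
  have hH : HLM l m = ∑ k ∈ range M, sigmaLM l m k := by
    unfold HLM
    rw [← ha]
    apply Finset.sum_subset (Finset.range_subset_range.mpr (le_max_left _ _))
    intro k hk1 hk2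
    refine hzero k ?_
    simp only [Finset.mem_range, not_lt] at hk2
    omega
  have hsplit : ∑ k ∈ range M, sigmaLM l m k
      = (∑ k ∈ range 4, sigmaLM l m k) + ∑ k ∈ Ico 4 M, sigmaLM l m k := by
    rw [range_eq_Ico, ← Finset.sum_Ico_consecutive _ (Nat.zero_le 4) (le_max_right (a+1) 4),
      ← range_eq_Ico]
  have htail : ‖((∑ k ∈ Ico 4 M, sigmaLM l m k : ℚ) : ℚ_[2])‖ ≤ 1/8 := by
    have key : ∀ (S : Finset ℕ), (∀ k ∈ S, 4 ≤ k) →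
        ‖(∑ k ∈ S, ((sigmaLM l m k : ℚ) : ℚ_[2]))‖ ≤ 1/8 := by
      intro S
      induction S using Finset.induction_on with
      | empty => intro _; simp
      | insert _ _ hnot ih =>
        intro hS
        rw [Finset.sum_insert hnot]
        refine le_trans (Padic.nonarchimedean _ _) (max_le ?_ ?_)
        · exact norm_sigma_le' l m _ hpar (hS _ (Finset.mem_insert_self _ _))
        · exact ih fun k hk => hS k (Finset.mem_insert_of_mem hk)
    have hcast : ((∑ k ∈ Ico 4 M, sigmaLM l m k : ℚ) : ℚ_[2])
        = ∑ k ∈ Ico 4 M, ((sigmaLM l m k : ℚ) : ℚ_[2]) := by push_cast; rfl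
    rw [hcast]
    exact key _ (fun k hk => (Finset.mem_Ico.mp hk).1)
  have hhead : ‖((8 * (N:ℚ) / 45 : ℚ) : ℚ_[2])‖ ≤ 1/8 := by
    push_cast
    rw [norm_div, norm_mul, norm_eight']
    have h45 : ‖(45:ℚ_[2])‖ = 1 := by
      simpa using norm_odd_eq_one' 45 rfl
    have hNle : ‖((N:ℤ) : ℚ_[2])‖ ≤ 1 := Padic.norm_int_le_one _
    rw [h45, div_one]
    calc (1/8 : ℝ) * ‖((N:ℤ) : ℚ_[2])‖ ≤ 1/8 * 1 := by gcongr
    _ = 1/8 := by norm_num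
  unfold Cong2
  rw [sub_zero]
  have hcast2 : ((HLM l m : ℚ) : ℚ_[2]) = ((8*(N:ℚ)/45 : ℚ) : ℚ_[2])
      + ((∑ k ∈ Ico 4 M, sigmaLM l m k : ℚ) : ℚ_[2]) := by
    rw [hH, hsplit, hT4]
    push_cast
    ring
  rw [hcast2]
  refine le_trans (Padic.nonarchimedean _ _) (le_trans (max_le hhead htail) ?_)
  norm_num
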